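/- For every n ≥ 2, the weight of the Steinhaus triangle generated by e₁ = (0,1,0,…,0) ∈ F₂ⁿ equals ⌊(3n-2)/2⌋. -/

import Mathlib

/-- The derivative of a binary sequence: `(∂x)ᵢ = xᵢ + xᵢ₊₁`. -/
def der {n : ℕ} (x : Fin n → ZMod 2) : Fin (n - 1) → ZMod 2 :=
  fun i => x ⟨i.1, by have := i.2; omega⟩ + x ⟨i.1 + 1, by have := i.2; omega⟩

/-- The iterated derivative `∂ʲx : F₂^{n-j}`. -/
def derIter {n : ℕ} (x : Fin n → ZMod 2) : (j : ℕ) → Fin (n - j) → ZMod 2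
  | 0 => x
  | j + 1 => der (derIter x j)

/-- The weight (number of ones) of a binary sequence. -/
def wt {m : ℕ} (y : Fin m → ZMod 2) : ℕ :=
  (Finset.univ.filter fun i => y i = 1).card

/-- The weight of the Steinhaus triangle of `x`: the sum of the weights of all rows. -/
def tw {n : ℕ} (x : Fin n → ZMod 2) : ℕ :=
  ∑ j ∈ Finset.range n, wt (derIter x j)

/-- The standard basis vector `e k` with a single one in position `k`. -/
def e (n k : ℕ) : Fin n → ZMod 2 := fun i => if i.1 = k then 1 else 0

def g (m : ℕ) : Fin m → ZMod 2 := fun i => if i.1 ≤ 1 then 1 else 0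

lemma der_e (m : ℕ) : der (e m 1) = g (m - 1) := by
  funext i
  simp only [der, e, g]
  rcases i with ⟨i, hi⟩
  match i with
  | 0 => simp
  | 1 => simp
  | (k+2) => simp

lemma der_g (m : ℕ) : der (g m) = e (m - 1) 1 := by
  funext i
  simp only [der, e, g]
  rcases i with ⟨i, hi⟩
  match i with
  | 0 => simp; decide
  | 1 => simp
  | (k+2) => simp

lemma row (n j : ℕ) : derIter (e n 1) j = if Even j then e (n - j) 1 else g (n - j) := by
  induction j with
  | zero => simp [derIter]
  | succ j ih =>
    rw [show derIter (e n 1) (j+1) = der (derIter (e n 1) j) from rfl, ih]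
    by_cases h : Even j
    · rw [if_pos h, if_neg (by simp [Nat.even_add_one, h])]
      exact der_e (n - j)
    · rw [if_neg h, if_pos (by simp [Nat.even_add_one, h])]
      exact der_g (n - j)

lemma wt_e (m : ℕ) : wt (e m 1) = if 2 ≤ m then 1 else 0 := by
  rw [wt]
  by_cases h : 2 ≤ m
  · rw [if_pos h]
    apply Finset.card_eq_one.mpr
    refine ⟨⟨1, by omega⟩, ?_⟩
    ext i
    simp [e, Fin.ext_iff]
  · rw [if_neg h]
    rw [Finset.card_eq_zero]
    apply Finset.filter_false_of_mem
    intro i _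
    have := i.2
    simp [e]
    omega

lemma wt_g (m : ℕ) : wt (g m) = min m 2 := by
  rw [wt]
  rcases m with _ | _ | m
  · simp
  · have : (Finset.univ.filter fun i : Fin 1 => g 1 i = 1) = {⟨0, by omega⟩} := by
      ext i; simp [g, Fin.ext_iff]
    rw [this]; simp
  · have : (Finset.univ.filter fun i : Fin (m+2) => g (m+2) i = 1) =
      {⟨0, by omega⟩, ⟨1, by omega⟩} := by
      ext i; rw [Finset.mem_filter]; simp only [Finset.mem_univ, true_and, Finset.mem_insert, Finset.mem_singleton, g, Fin.ext_iff]; split_ifs with h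
      · simp only [true_iff]; omega
      · simp only [false_iff, zero_ne_one (α := ZMod 2)]; omega
    rw [this, Finset.card_insert_of_notMem (by simp), Finset.card_singleton]
    omega

lemma tw_eq (n : ℕ) : tw (e n 1) =
    ∑ j ∈ Finset.range n, (if Even j then (if 2 ≤ n - j then 1 else 0) else min (n - j) 2) := by
  rw [tw]
  refine Finset.sum_congr rfl fun j _ => ?_
  rw [row]
  by_cases h : Even j
  · rw [if_pos h, if_pos h, wt_e]
  · rw [if_neg h, if_neg h, wt_g]

lemma Ssum : ∀ n, 2 ≤ n →
    (∑ j ∈ Finset.range n, (if Even j then (if 2 ≤ n - j then 1 else 0) else min (n - j) 2))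
      = (3 * n - 2) / 2 := by
  intro n
  induction n using Nat.strong_induction_on with
  | _ n ih =>
    intro hn
    rcases n with _ | _ | _ | _ | n
    · omega
    · omega
    · simp [Finset.sum_range_succ]
    · simp [Finset.sum_range_succ]
    · rw [Finset.sum_range_succ', Finset.sum_range_succ']
      have hc : ∀ j, (if Even (j + 1 + 1) then (if 2 ≤ n + 4 - (j + 1 + 1) then 1 else 0)
          else min (n + 4 - (j + 1 + 1)) 2)
          = (if Even j then (if 2 ≤ n + 2 - j then 1 else 0) else min (n + 2 - j) 2) := by
        intro j
        have he : Even (j + 1 + 1) ↔ Even j := by simp [Nat.even_add_one]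
        have hs : n + 4 - (j + 1 + 1) = n + 2 - j := by omega
        rw [hs]
        by_cases h : Even j
        · rw [if_pos (he.mpr h), if_pos h]
        · rw [if_neg (fun hh => h (he.mp hh)), if_neg h]
      rw [Finset.sum_congr rfl fun j _ => hc j, ih (n + 2) (by omega) (by omega)]
      norm_num
      omega

theorem stmt3 (n : ℕ) (hn : 2 ≤ n) : tw (e n 1) = (3 * n - 2) / 2 := by
  rw [tw_eq]
  exact Ssum n hn
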